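/- Completeness of LGT^∞ for the minimal Kripke fixed point: if |#φ|_{Φ_K} ≤ α (i.e., the sentence φ enters the minimal fixed point by stage α), then there exists n ∈ ω such that ⇒ φ has a cut-free LGT^∞ derivation of height ≤ α+n; dually, if |#¬φ|_{Φ_K} ≤ α, then φ ⇒ has a cut-free derivation of height ≤ α+n for some n ∈ ω. -/

import Mathlib

/-- Terms of the language of arithmetic `{0, S, +, ×}`. -/
inductive ATm : Type where
  | var : ℕ → ATm
  | zero : ATm
  | succ : ATm → ATm
  | add : ATm → ATm → ATm
  | mul : ATm → ATm → ATm

/-- Formulas of `L_ℕ ∪ {T}`. -/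
inductive AFm : Type where
  | eq : ATm → ATm → AFm
  | Tr : ATm → AFm
  | neg : AFm → AFm
  | conj : AFm → AFm → AFm
  | all : ℕ → AFm → AFm

/-- The numeral `n̄`. -/
def numeral : ℕ → ATm
  | 0 => .zero
  | n + 1 => .succ (numeral n)

def ATm.fv : ATm → Finset ℕ
  | .var n => {n}
  | .zero => ∅
  | .succ s => s.fv
  | .add s t => s.fv ∪ t.fv
  | .mul s t => s.fv ∪ t.fv

def ATm.subst (x : ℕ) (t : ATm) : ATm → ATm
  | .var n => if n = x then t else .var n
  | .zero => .zero
  | .succ s => .succ (ATm.subst x t s)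
  | .add s u => .add (ATm.subst x t s) (ATm.subst x t u)
  | .mul s u => .mul (ATm.subst x t s) (ATm.subst x t u)

def AFm.fv : AFm → Finset ℕ
  | .eq s t => s.fv ∪ t.fv
  | .Tr t => t.fv
  | .neg φ => φ.fv
  | .conj φ ψ => φ.fv ∪ ψ.fv
  | .all x φ => φ.fv.erase x

def AFm.subst (x : ℕ) (t : ATm) : AFm → AFm
  | .eq s u => .eq (ATm.subst x t s) (ATm.subst x t u)
  | .Tr s => .Tr (ATm.subst x t s)
  | .neg φ => .neg (φ.subst x t)
  | .conj φ ψ => .conj (φ.subst x t) (ψ.subst x t)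
  | .all y φ => if y = x then .all y φ else .all y (φ.subst x t)

/-- A sentence: a closed formula. -/
def AFm.Sentence (φ : AFm) : Prop := φ.fv = ∅

/-- Purely arithmetical (T-free) formulas. -/
def AFm.Arith : AFm → Prop
  | .eq _ _ => True
  | .Tr _ => False
  | .neg φ => φ.Arith
  | .conj φ ψ => φ.Arith ∧ ψ.Arith
  | .all _ φ => φ.Arith

/-- An arithmetical atom. -/
def AFm.ArithAtom (φ : AFm) : Prop := ∃ s t, φ = AFm.eq s t

/-- Gödel numbering of terms. -/
def ATm.code : ATm → ℕ
  | .var n => Nat.pair 0 n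
  | .zero => Nat.pair 1 0
  | .succ s => Nat.pair 2 s.code
  | .add s t => Nat.pair 3 (Nat.pair s.code t.code)
  | .mul s t => Nat.pair 4 (Nat.pair s.code t.code)

/-- Gödel numbering `#φ` of formulas. -/
def AFm.code : AFm → ℕ
  | .eq s t => Nat.pair 0 (Nat.pair s.code t.code)
  | .Tr t => Nat.pair 1 t.code
  | .neg φ => Nat.pair 2 φ.code
  | .conj φ ψ => Nat.pair 3 (Nat.pair φ.code ψ.code)
  | .all x φ => Nat.pair 4 (Nat.pair x φ.code)

universe u

/-- Value of a closed term in the standard model (junk value `0` on variables). -/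
def ATm.val : ATm → ℕ
  | .var _ => 0
  | .zero => 0
  | .succ s => s.val + 1
  | .add s t => s.val + t.val
  | .mul s t => s.val * t.val

/-- Closed terms. -/
def ATm.Closed (t : ATm) : Prop := t.fv = ∅

/-- Logical complexity of a formula. -/
def AFm.depth : AFm → ℕ
  | .eq _ _ => 0
  | .Tr _ => 0
  | .neg φ => φ.depth + 1
  | .all _ φ => φ.depth + 1
  | .conj φ ψ => max φ.depth ψ.depth + 1

/-- `DerivInf α m β Γ Δ`: derivations in the infinitary system `LGT^∞` of
`Γ ⇒ Δ` with ordinal height `≤ α`, cut-rank `≤ m`, and ordinal T-complexity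
`≤ β`.  The only initial sequents are true/false closed equations (no initial
sequents contain `T`); the truth rules use closed terms denoting Gödel numbers
of sentences; `∀` on the right is governed by the ω-rule. -/
inductive DerivInf : Ordinal.{0} → ℕ → Ordinal.{0} → Multiset AFm → Multiset AFm → Prop where
  | eqT {α m β} {Γ Δ : Multiset AFm} (r s : ATm) :
      r.Closed → s.Closed → r.val = s.val → DerivInf α m β Γ (.eq r s ::ₘ Δ)
  | eqF {α m β} {Γ Δ : Multiset AFm} (r s : ATm) :
      r.Closed → s.Closed → r.val ≠ s.val → DerivInf α m β (.eq r s ::ₘ Γ) Δ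
  | trL {α₀ β₀ α m β} {Γ Δ : Multiset AFm} (φ : AFm) (t : ATm) :
      DerivInf α₀ m β₀ (φ ::ₘ Γ) Δ → φ.Sentence → t.Closed → t.val = φ.code →
      α₀ < α → β₀ < β → DerivInf α m β (.Tr t ::ₘ Γ) Δ
  | trR {α₀ β₀ α m β} {Γ Δ : Multiset AFm} (φ : AFm) (t : ATm) :
      DerivInf α₀ m β₀ Γ (φ ::ₘ Δ) → φ.Sentence → t.Closed → t.val = φ.code →
      α₀ < α → β₀ < β → DerivInf α m β Γ (.Tr t ::ₘ Δ)
  | negL {α₀ β₀ α m β} {Γ Δ : Multiset AFm} (φ : AFm) :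
      DerivInf α₀ m β₀ Γ (φ ::ₘ Δ) → α₀ < α → β₀ ≤ β →
      DerivInf α m β (.neg φ ::ₘ Γ) Δ
  | negR {α₀ β₀ α m β} {Γ Δ : Multiset AFm} (φ : AFm) :
      DerivInf α₀ m β₀ (φ ::ₘ Γ) Δ → α₀ < α → β₀ ≤ β →
      DerivInf α m β Γ (.neg φ ::ₘ Δ)
  | conjL {α₀ β₀ α m β} {Γ Δ : Multiset AFm} (φ ψ : AFm) :
      DerivInf α₀ m β₀ (φ ::ₘ ψ ::ₘ Γ) Δ → α₀ < α → β₀ ≤ β →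
      DerivInf α m β (.conj φ ψ ::ₘ Γ) Δ
  | conjR {α₀ α₁ β₀ β₁ α m β} {Γ Δ : Multiset AFm} (φ ψ : AFm) :
      DerivInf α₀ m β₀ Γ (φ ::ₘ Δ) → DerivInf α₁ m β₁ Γ (ψ ::ₘ Δ) →
      α₀ < α → α₁ < α → β₀ ≤ β → β₁ ≤ β →
      DerivInf α m β Γ (.conj φ ψ ::ₘ Δ)
  | allL {α₀ β₀ α m β} {Γ Δ : Multiset AFm} (x : ℕ) (φ : AFm) (t : ATm) :
      t.Closed → DerivInf α₀ m β₀ ((φ.subst x t) ::ₘ (.all x φ) ::ₘ Γ) Δ →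
      α₀ < α → β₀ ≤ β → DerivInf α m β ((.all x φ) ::ₘ Γ) Δ
  | omega {α m β} {Γ Δ : Multiset AFm} (x : ℕ) (φ : AFm)
      (f g : ATm → Ordinal.{0}) :
      (∀ t : ATm, t.Closed → f t < α) → (∀ t : ATm, t.Closed → g t ≤ β) →
      (∀ t : ATm, t.Closed → DerivInf (f t) m (g t) Γ ((φ.subst x t) ::ₘ Δ)) →
      DerivInf α m β Γ ((.all x φ) ::ₘ Δ)
  | cut {α₀ α₁ β₀ β₁ α m β} {Γ Δ : Multiset AFm} (φ : AFm) :
      DerivInf α₀ m β₀ Γ (φ ::ₘ Δ) → DerivInf α₁ m β₁ (φ ::ₘ Γ) Δ →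
      φ.depth < m → α₀ < α → α₁ < α → β₀ ≤ β → β₁ ≤ β →
      DerivInf α m β Γ Δ

/-- The Kripke jump `Φ_K` induced by the X-positive formula `K(X,x)` expressing
the Strong-Kleene closure conditions for grounded truth, acting on sets of
Gödel numbers. -/
def PhiK (S : Set ℕ) : Set ℕ :=
  {n | ∃ φ : AFm, φ.code = n ∧ φ.Sentence ∧
    ((∃ r s : ATm, φ = .eq r s ∧ r.val = s.val) ∨
     (∃ r s : ATm, φ = .neg (.eq r s) ∧ r.val ≠ s.val) ∨
     (∃ t : ATm, φ = .Tr t ∧ t.Closed ∧ t.val ∈ S) ∨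
     (∃ (t : ATm) (ψ : AFm), φ = .neg (.Tr t) ∧ t.Closed ∧ ψ.code = t.val ∧
        (AFm.neg ψ).code ∈ S) ∨
     (∃ ψ : AFm, φ = .neg (.neg ψ) ∧ ψ.code ∈ S) ∨
     (∃ ψ χ : AFm, φ = .conj ψ χ ∧ ψ.code ∈ S ∧ χ.code ∈ S) ∨
     (∃ ψ χ : AFm, φ = .neg (.conj ψ χ) ∧
        ((AFm.neg ψ).code ∈ S ∨ (AFm.neg χ).code ∈ S)) ∨
     (∃ (x : ℕ) (ψ : AFm), φ = .all x ψ ∧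
        ∀ t : ATm, t.Closed → (ψ.subst x t).code ∈ S) ∨
     (∃ (x : ℕ) (ψ : AFm), φ = .neg (.all x ψ) ∧
        ∃ t : ATm, t.Closed ∧ (AFm.neg (ψ.subst x t)).code ∈ S))}

/-- The transfinite iteration `Φ_K^α := Φ_K(⋃_{β<α} Φ_K^β)`. -/
noncomputable def PhiIter : Ordinal.{0} → Set ℕ
  | α => PhiK {n | ∃ β, ∃ _ : β < α, n ∈ PhiIter β}
termination_by α => α
decreasing_by assumption

/-- The minimal fixed point `I_{Φ_K}` of the Kripke jump. -/
def Ilfp : Set ℕ := {n | ∃ α : Ordinal.{0}, n ∈ PhiIter α}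


/-! ### Auxiliary lemmas -/

theorem atm_code_inj : ∀ {s t : ATm}, s.code = t.code → s = t := by
  intro s
  induction s with
  | var n =>
      intro t h; cases t <;> simp [ATm.code, Nat.pair_eq_pair] at h
      rw [h]
  | zero =>
      intro t h; cases t <;> simp [ATm.code, Nat.pair_eq_pair] at h
      rfl
  | succ s ih =>
      intro t h; cases t <;> simp [ATm.code, Nat.pair_eq_pair] at h
      rw [ih h]
  | add s u ihs ihu =>
      intro t h; cases t <;> simp [ATm.code, Nat.pair_eq_pair] at h
      rw [ihs h.1, ihu h.2]
  | mul s u ihs ihu =>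
      intro t h; cases t <;> simp [ATm.code, Nat.pair_eq_pair] at h
      rw [ihs h.1, ihu h.2]

theorem afm_code_inj : ∀ {φ ψ : AFm}, φ.code = ψ.code → φ = ψ := by
  intro φ
  induction φ with
  | eq r s =>
      intro ψ h; cases ψ <;> simp [AFm.code, Nat.pair_eq_pair] at h
      rw [atm_code_inj h.1, atm_code_inj h.2]
  | Tr t =>
      intro ψ h; cases ψ <;> simp [AFm.code, Nat.pair_eq_pair] at h
      rw [atm_code_inj h]
  | neg φ ih =>
      intro ψ h; cases ψ <;> simp [AFm.code, Nat.pair_eq_pair] at h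
      rw [ih h]
  | conj φ₁ φ₂ ih₁ ih₂ =>
      intro ψ h; cases ψ <;> simp [AFm.code, Nat.pair_eq_pair] at h
      rw [ih₁ h.1, ih₂ h.2]
  | all x φ ih =>
      intro ψ h; cases ψ <;> simp [AFm.code, Nat.pair_eq_pair] at h
      rw [h.1, ih h.2]

noncomputable def pad (α : Ordinal) : Ordinal := α + α % Ordinal.omega0 + 2

theorem lt_add_one' (a : Ordinal) : a < a + 1 := by
  rw [Ordinal.add_one_eq_succ]; exact Order.lt_succ a

theorem pad_pos (α : Ordinal) : 0 < pad α :=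
  lt_of_lt_of_le (by norm_num) le_add_self

theorem pad_step {β α : Ordinal} (h : β < α) : pad β + 2 ≤ pad α := by
  obtain ⟨k, hk⟩ := Ordinal.lt_omega0.1 (Ordinal.mod_lt β Ordinal.omega0_ne_zero)
  obtain ⟨l, hl⟩ := Ordinal.lt_omega0.1 (Ordinal.mod_lt α Ordinal.omega0_ne_zero)
  have hβ := Ordinal.div_add_mod β Ordinal.omega0
  have hα := Ordinal.div_add_mod α Ordinal.omega0
  rw [hk] at hβ; rw [hl] at hα
  have hd : β / Ordinal.omega0 ≤ α / Ordinal.omega0 := Ordinal.div_le_left h.le _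
  unfold pad
  rw [hk, hl]
  rcases lt_or_eq_of_le hd with hlt | heq
  · have h1 : β + (k:Ordinal) + 2 + 2
        < Ordinal.omega0 * (β / Ordinal.omega0) + Ordinal.omega0 := by
      conv_lhs => rw [← hβ]
      rw [add_assoc, add_assoc, add_assoc]
      refine add_lt_add_right ?_ _
      have e : ((k:Ordinal) + ((k:Ordinal) + (2 + 2))) = ((k + (k + 4) : ℕ) : Ordinal) := by
        push_cast; norm_num
      rw [e]; exact Ordinal.nat_lt_omega0 _
    refine h1.le.trans ?_
    have h2 : Ordinal.omega0 * (β / Ordinal.omega0) + Ordinal.omega0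
        ≤ Ordinal.omega0 * (α / Ordinal.omega0) := by
      rw [← Ordinal.mul_succ]
      exact mul_le_mul_right (Order.succ_le_of_lt hlt) _
    refine h2.trans ?_
    calc Ordinal.omega0 * (α / Ordinal.omega0) ≤ α := Ordinal.mul_div_le _ _
      _ ≤ α + (l:Ordinal) + 2 := by
          rw [add_assoc]; exact le_self_add
  · rw [heq] at hβ
    have hkl : k < l := by
      have h' : Ordinal.omega0 * (α / Ordinal.omega0) + (k : Ordinal)
          < Ordinal.omega0 * (α / Ordinal.omega0) + (l : Ordinal) := by
        rw [hβ, hα]; exact h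
      exact_mod_cast (add_lt_add_iff_left _).1 h'
    have eL : β + (k:Ordinal) + 2 + 2
        = Ordinal.omega0 * (α / Ordinal.omega0) + ((k + (k + 4) : ℕ) : Ordinal) := by
      conv_lhs => rw [← hβ]
      simp only [add_assoc]
      congr 1
      push_cast; norm_num
    have eR : α + (l:Ordinal) + 2
        = Ordinal.omega0 * (α / Ordinal.omega0) + ((l + (l + 2) : ℕ) : Ordinal) := by
      conv_lhs => rw [← hα]
      simp only [add_assoc]
      congr 1
      push_cast; norm_num
    rw [eL, eR]
    exact add_le_add_right (by exact_mod_cast (by omega : k + (k + 4) ≤ l + (l + 2))) _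

theorem pad_lt {β α : Ordinal} (h : β < α) : pad β < pad α :=
  lt_of_lt_of_le (lt_of_lt_of_le (lt_add_one' _)
    (add_le_add_right (by norm_num) _)) (pad_step h)

theorem pad_add_one_lt {β α : Ordinal} (h : β < α) : pad β + 1 < pad α :=
  lt_of_lt_of_le (add_lt_add_right (by norm_num) _) (pad_step h)

theorem DerivInf.weakL {α : Ordinal} {m : ℕ} {β : Ordinal} {Γ Δ : Multiset AFm}
    (h : DerivInf α m β Γ Δ) (χ : AFm) : DerivInf α m β (χ ::ₘ Γ) Δ := by
  induction h with
  | eqT r s h1 h2 h3 => exact .eqT r s h1 h2 h3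
  | eqF r s h1 h2 h3 => rw [Multiset.cons_swap]; exact .eqF r s h1 h2 h3
  | trL φ t _ hs htc hv hα hβ ih =>
      rw [Multiset.cons_swap]
      exact .trL φ t (by rwa [Multiset.cons_swap] at ih) hs htc hv hα hβ
  | trR φ t _ hs htc hv hα hβ ih => exact .trR φ t ih hs htc hv hα hβ
  | negL φ _ hα hβ ih => rw [Multiset.cons_swap]; exact .negL φ ih hα hβ
  | negR φ _ hα hβ ih => exact .negR φ (by rwa [Multiset.cons_swap] at ih) hα hβ
  | conjL φ ψ _ hα hβ ih =>
      rw [Multiset.cons_swap]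
      exact .conjL φ ψ (by rwa [Multiset.cons_swap χ φ, Multiset.cons_swap χ ψ] at ih) hα hβ
  | conjR φ ψ _ _ h1 h2 h3 h4 ih1 ih2 => exact .conjR φ ψ ih1 ih2 h1 h2 h3 h4
  | allL x φ t htc _ hα hβ ih =>
      rw [Multiset.cons_swap]
      exact .allL x φ t htc
        (by rwa [Multiset.cons_swap χ _, Multiset.cons_swap χ _] at ih) hα hβ
  | omega x φ f g hf hg _ ih => exact .omega x φ f g hf hg ih
  | cut φ _ _ hd h1 h2 h3 h4 ih1 ih2 =>
      exact .cut φ ih1 (by rwa [Multiset.cons_swap] at ih2) hd h1 h2 h3 h4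

theorem mem_phiIter_sentence {n : ℕ} {γ : Ordinal} (h : n ∈ PhiIter γ) :
    ∃ ψ : AFm, ψ.code = n ∧ ψ.Sentence := by
  rw [PhiIter] at h
  obtain ⟨ψ, h1, h2, -⟩ := h
  exact ⟨ψ, h1, h2⟩

theorem lgt_main (α : Ordinal) : ∀ φ : AFm,
    (φ.code ∈ PhiIter α → DerivInf (pad α) 0 (pad α) 0 {φ}) ∧
    ((AFm.neg φ).code ∈ PhiIter α → DerivInf (pad α) 0 (pad α) {φ} 0) := by
  induction α using Ordinal.induction with
  | _ α IH =>
  intro φ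
  constructor
  · intro h
    rw [PhiIter] at h
    obtain ⟨φ', hc, hsent, hcase⟩ := h
    have hφ : φ' = φ := afm_code_inj hc
    subst hφ
    rcases hcase with ⟨r,s,rfl,hv⟩ | ⟨r,s,rfl,hv⟩ | ⟨t,rfl,htc,γ,hγ,hmem⟩ |
      ⟨t,ψ,rfl,htc,hψc,γ,hγ,hmem⟩ | ⟨ψ,rfl,γ,hγ,hmem⟩ |
      ⟨ψ,χ,rfl,⟨γ1,hγ1,hm1⟩,⟨γ2,hγ2,hm2⟩⟩ | ⟨ψ,χ,rfl,hor⟩ | ⟨x,ψ,rfl,hall⟩ |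
      ⟨x,ψ,rfl,t,htc,γ,hγ,hmem⟩
    · -- true equation
      have hcl : r.Closed ∧ s.Closed := by
        simpa [AFm.Sentence, AFm.fv, ATm.Closed, Finset.union_eq_empty] using hsent
      exact DerivInf.eqT r s hcl.1 hcl.2 hv
    · -- negation of false equation
      have hcl : r.Closed ∧ s.Closed := by
        simpa [AFm.Sentence, AFm.fv, ATm.Closed, Finset.union_eq_empty] using hsent
      exact DerivInf.negR _ (DerivInf.eqF (α := 0) (β := 0) r s hcl.1 hcl.2 hv)
        (pad_pos α) zero_le
    · -- Tr t
      obtain ⟨ψ, hψc, hψs⟩ := mem_phiIter_sentence hmem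
      have D := (IH γ hγ ψ).1 (by rw [hψc]; exact hmem)
      exact DerivInf.trR ψ t D hψs htc hψc.symm (pad_lt hγ) (pad_lt hγ)
    · -- neg (Tr t)
      obtain ⟨χ, hχc, hχs⟩ := mem_phiIter_sentence hmem
      have hχ : χ = AFm.neg ψ := afm_code_inj hχc
      subst hχ
      have hψs : ψ.Sentence := by simpa [AFm.Sentence, AFm.fv] using hχs
      have D := (IH γ hγ ψ).2 hmem
      have step : DerivInf (pad γ + 1) 0 (pad γ + 1) {AFm.Tr t} 0 :=
        DerivInf.trL ψ t D hψs htc hψc.symm (lt_add_one' _) (lt_add_one' _)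
      exact DerivInf.negR _ step (pad_add_one_lt hγ) (le_of_lt (pad_add_one_lt hγ))
    · -- neg (neg ψ)
      have D := (IH γ hγ ψ).1 hmem
      have step : DerivInf (pad γ + 1) 0 (pad γ) {AFm.neg ψ} 0 :=
        DerivInf.negL ψ D (lt_add_one' _) le_rfl
      exact DerivInf.negR _ step (pad_add_one_lt hγ) (le_of_lt (pad_lt hγ))
    · -- conj
      exact DerivInf.conjR ψ χ ((IH γ1 hγ1 ψ).1 hm1) ((IH γ2 hγ2 χ).1 hm2)
        (pad_lt hγ1) (pad_lt hγ2) (le_of_lt (pad_lt hγ1)) (le_of_lt (pad_lt hγ2))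
    · -- neg (conj ψ χ)
      rcases hor with ⟨γ,hγ,hm⟩ | ⟨γ,hγ,hm⟩
      · have W := ((IH γ hγ ψ).2 hm).weakL χ
        rw [← Multiset.cons_zero, Multiset.cons_swap] at W
        have step : DerivInf (pad γ + 1) 0 (pad γ) {AFm.conj ψ χ} 0 :=
          DerivInf.conjL ψ χ W (lt_add_one' _) le_rfl
        exact DerivInf.negR _ step (pad_add_one_lt hγ) (le_of_lt (pad_lt hγ))
      · have W := ((IH γ hγ χ).2 hm).weakL ψ
        have step : DerivInf (pad γ + 1) 0 (pad γ) {AFm.conj ψ χ} 0 :=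
          DerivInf.conjL ψ χ W (lt_add_one' _) le_rfl
        exact DerivInf.negR _ step (pad_add_one_lt hγ) (le_of_lt (pad_lt hγ))
    · -- all x ψ : ω-rule
      have hch : ∀ t : ATm, t.Closed → ∃ β, ∃ _ : β < α, (ψ.subst x t).code ∈ PhiIter β :=
        hall
      classical
      refine DerivInf.omega x ψ
        (fun t => if h : t.Closed then pad (hch t h).choose else 0)
        (fun t => if h : t.Closed then pad (hch t h).choose else 0) ?_ ?_ ?_
      · intro t ht
        rw [dif_pos ht]
        obtain ⟨h1, -⟩ := (hch t ht).choose_spec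
        exact pad_lt h1
      · intro t ht
        rw [dif_pos ht]
        obtain ⟨h1, -⟩ := (hch t ht).choose_spec
        exact le_of_lt (pad_lt h1)
      · intro t ht
        rw [dif_pos ht]
        obtain ⟨h1, h2⟩ := (hch t ht).choose_spec
        exact (IH _ h1 _).1 h2
    · -- neg (all x ψ)
      have W := ((IH γ hγ (ψ.subst x t)).2 hmem).weakL (AFm.all x ψ)
      rw [← Multiset.cons_zero, Multiset.cons_swap] at W
      have step : DerivInf (pad γ + 1) 0 (pad γ) {AFm.all x ψ} 0 :=
        DerivInf.allL x ψ t htc W (lt_add_one' _) le_rfl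
      exact DerivInf.negR _ step (pad_add_one_lt hγ) (le_of_lt (pad_lt hγ))
  · intro h
    rw [PhiIter] at h
    obtain ⟨φ', hc, hsent, hcase⟩ := h
    have hφ : φ' = AFm.neg φ := afm_code_inj hc
    subst hφ
    rcases hcase with ⟨r,s,heq,hv⟩ | ⟨r,s,heq,hv⟩ | ⟨t,heq,htc,hm⟩ |
      ⟨t,ψ,heq,htc,hψc,γ,hγ,hmem⟩ | ⟨ψ,heq,γ,hγ,hmem⟩ | ⟨ψ,χ,heq,hm1,hm2⟩ |
      ⟨ψ,χ,heq,hor⟩ | ⟨x,ψ,heq,hall⟩ | ⟨x,ψ,heq,t,htc,γ,hγ,hmem⟩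
    · exact AFm.noConfusion heq
    · -- φ = eq r s, false equation
      injection heq with h'
      subst h'
      have hcl : r.Closed ∧ s.Closed := by
        simpa [AFm.Sentence, AFm.fv, ATm.Closed, Finset.union_eq_empty] using hsent
      exact DerivInf.eqF r s hcl.1 hcl.2 hv
    · exact AFm.noConfusion heq
    · -- φ = Tr t
      injection heq with h'
      subst h'
      obtain ⟨χ, hχc, hχs⟩ := mem_phiIter_sentence hmem
      have hχ : χ = AFm.neg ψ := afm_code_inj hχc
      subst hχ
      have hψs : ψ.Sentence := by simpa [AFm.Sentence, AFm.fv] using hχs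
      have D := (IH γ hγ ψ).2 hmem
      exact DerivInf.trL ψ t D hψs htc hψc.symm (pad_lt hγ) (pad_lt hγ)
    · -- φ = neg ψ
      injection heq with h'
      subst h'
      exact DerivInf.negL ψ ((IH γ hγ ψ).1 hmem) (pad_lt hγ) (le_of_lt (pad_lt hγ))
    · exact AFm.noConfusion heq
    · -- φ = conj ψ χ
      injection heq with h'
      subst h'
      rcases hor with ⟨γ,hγ,hm⟩ | ⟨γ,hγ,hm⟩
      · have W := ((IH γ hγ ψ).2 hm).weakL χ
        rw [← Multiset.cons_zero, Multiset.cons_swap] at W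
        exact DerivInf.conjL ψ χ W (pad_lt hγ) (le_of_lt (pad_lt hγ))
      · have W := ((IH γ hγ χ).2 hm).weakL ψ
        exact DerivInf.conjL ψ χ W (pad_lt hγ) (le_of_lt (pad_lt hγ))
    · exact AFm.noConfusion heq
    · -- φ = all x ψ
      injection heq with h'
      subst h'
      have W := ((IH γ hγ (ψ.subst x t)).2 hmem).weakL (AFm.all x ψ)
      rw [← Multiset.cons_zero, Multiset.cons_swap] at W
      exact DerivInf.allL x ψ t htc W (pad_lt hγ) (le_of_lt (pad_lt hγ))

/-- completeness of `LGT^∞` for the minimal Kripke fixed point: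
if `#φ` enters the minimal fixed point by stage `α`, then `⇒ φ` has a cut-free
derivation of height `≤ α + n` for some `n ∈ ω`; dually for `#¬φ` and `φ ⇒`. -/
theorem lgtInf_completeness (φ : AFm) (hS : φ.Sentence) (α : Ordinal) :
    (φ.code ∈ PhiIter α →
      ∃ n : ℕ, ∃ β ≤ α + (n : Ordinal), DerivInf (α + (n : Ordinal)) 0 β 0 {φ}) ∧
    ((AFm.neg φ).code ∈ PhiIter α →
      ∃ n : ℕ, ∃ β ≤ α + (n : Ordinal), DerivInf (α + (n : Ordinal)) 0 β {φ} 0) := by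
  obtain ⟨k, hk⟩ := Ordinal.lt_omega0.1 (Ordinal.mod_lt α Ordinal.omega0_ne_zero)
  have hpad : pad α = α + ((k + 2 : ℕ) : Ordinal) := by
    unfold pad; rw [hk]; push_cast; rw [add_assoc]
  constructor
  · intro h
    exact ⟨k + 2, α + ((k + 2 : ℕ) : Ordinal), le_rfl, by rw [← hpad]; exact (lgt_main α φ).1 h⟩
  · intro h
    exact ⟨k + 2, α + ((k + 2 : ℕ) : Ordinal), le_rfl, by rw [← hpad]; exact (lgt_main α φ).2 h⟩
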